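/- The space 𝒢⁰ is compact and Hausdorff. The space 𝒢 is not Hausdorff: for every i ∈ ℕ, the sequence (x_{ij})_{j∈ℕ} converges in 𝒢 both to (0, y_i) and to (1, y_i), and these are distinct points of 𝒢. -/

import Mathlib

/-- The unit space `𝒢⁰ = X ⊔ Y ⊔ Z ⊔ {ε}`. -/
inductive U0 : Type
  | x : ℕ → ℕ → U0
  | y : ℕ → U0
  | z : ℕ → U0
  | eps : U0

/-- Basic neighbourhoods `U_{y_i,F} = {y_i} ∪ (X_i \ F)` of `y_i`, where the finite set
`F ⊆ X_i` is recorded by the finite set of second indices `j`. -/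
def Uy (i : ℕ) (F : Finset ℕ) : Set U0 :=
  {u | u = U0.y i ∨ ∃ j ∉ F, u = U0.x i j}

/-- Basic neighbourhoods `U_{F_Y,F_Z} = 𝒢⁰ \ (⋃_{y_i ∈ F_Y} U_{y_i,∅} ∪ F_Z)` of `ε`,
where the finite sets `F_Y ⊆ Y`, `F_Z ⊆ Z` are recorded by finite sets of indices. -/
def UFF (FY FZ : Finset ℕ) : Set U0 :=
  ((⋃ i ∈ FY, Uy i ∅) ∪ (U0.z '' (FZ : Set ℕ)))ᶜ

/-- The topology on the unit space, generated by the basis described above. -/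
instance : TopologicalSpace U0 :=
  TopologicalSpace.generateFrom
    ({s | ∃ i j, s = {U0.x i j}} ∪ {s | ∃ i, s = {U0.z i}} ∪
      {s | ∃ i F, s = Uy i F} ∪ {s | ∃ FY FZ, s = UFF FY FZ})

/-- The groupoid `𝒢 = X ⊔ ((ℤ/2) × Y) ⊔ (G × Z) ⊔ (G × {ε})`, as a set,
where `G = (ℤ/2) × H`. -/
inductive Grpd (H : Type) : Type
  | x : ℕ → ℕ → Grpd H
  | y : ZMod 2 → ℕ → Grpd H
  | z : ZMod 2 × H → ℕ → Grpd H
  | eps : ZMod 2 × H → Grpd H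

/-- The section `σ_g : 𝒢⁰ → 𝒢` associated to `g = (n,h) ∈ G`. -/
def sigmaMap {H : Type} (g : ZMod 2 × H) : U0 → Grpd H
  | U0.x i j => Grpd.x i j
  | U0.y i => Grpd.y g.1 i
  | U0.z i => Grpd.z g i
  | U0.eps => Grpd.eps g

/-- The bisection `U_g = σ_g(𝒢⁰)`. -/
def Ug {H : Type} (g : ZMod 2 × H) : Set (Grpd H) :=
  Set.range (sigmaMap g)

/-- The topology on `𝒢`, generated by the sets `σ_g(U)` for `U ⊆ 𝒢⁰` open. -/
instance (H : Type) : TopologicalSpace (Grpd H) :=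
  TopologicalSpace.generateFrom {s | ∃ (g : ZMod 2 × H) (U : Set U0), IsOpen U ∧ s = sigmaMap g '' U}

/-- The algebra `A(𝒢)`: functions of the form `f = ∑_{g ∈ T} f_g`, `T ⊆ G` finite, where each
`f_g` vanishes outside `U_g` and `f_g ∘ σ_g` is continuous. -/
def AG (H : Type) : Set (Grpd H → ℂ) :=
  {f | ∃ (T : Finset (ZMod 2 × H)) (F : (ZMod 2 × H) → Grpd H → ℂ),
    (∀ g : ZMod 2 × H, ∀ γ ∉ Ug g, F g γ = 0) ∧
    (∀ g : ZMod 2 × H, Continuous (F g ∘ sigmaMap g)) ∧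
    f = fun γ => ∑ g ∈ T, F g γ}

/-- A function on `𝒢` is singular if its support has empty interior. -/
def Singular {H : Type} (f : Grpd H → ℂ) : Prop :=
  interior {γ : Grpd H | f γ ≠ 0} = ∅


namespace StmtAux

open TopologicalSpace Filter


open TopologicalSpace Filter

@[simp] lemma mem_Uy_x {i j i' : ℕ} {F : Finset ℕ} :
    U0.x i j ∈ Uy i' F ↔ i = i' ∧ j ∉ F := by
  simp only [Uy, Set.mem_setOf_eq]
  constructor
  · rintro (h | ⟨j', hj', h⟩)
    · cases h
    · cases h; exact ⟨rfl, hj'⟩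
  · rintro ⟨rfl, hj⟩; exact Or.inr ⟨j, hj, rfl⟩

@[simp] lemma mem_Uy_y {i i' : ℕ} {F : Finset ℕ} :
    U0.y i ∈ Uy i' F ↔ i = i' := by
  simp only [Uy, Set.mem_setOf_eq]
  constructor
  · rintro (h | ⟨j', _, h⟩)
    · cases h; rfl
    · cases h
  · rintro rfl; exact Or.inl rfl

@[simp] lemma not_mem_Uy_z {k i : ℕ} {F : Finset ℕ} : U0.z k ∉ Uy i F := by
  rintro (h | ⟨j', _, h⟩) <;> cases h

@[simp] lemma not_mem_Uy_eps {i : ℕ} {F : Finset ℕ} : U0.eps ∉ Uy i F := by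
  rintro (h | ⟨j', _, h⟩) <;> cases h

@[simp] lemma mem_UFF_x {i j : ℕ} {FY FZ : Finset ℕ} :
    U0.x i j ∈ UFF FY FZ ↔ i ∉ FY := by
  simp [UFF]

@[simp] lemma mem_UFF_y {i : ℕ} {FY FZ : Finset ℕ} :
    U0.y i ∈ UFF FY FZ ↔ i ∉ FY := by
  simp [UFF]

@[simp] lemma mem_UFF_z {k : ℕ} {FY FZ : Finset ℕ} :
    U0.z k ∈ UFF FY FZ ↔ k ∉ FZ := by
  simp [UFF]

@[simp] lemma mem_UFF_eps {FY FZ : Finset ℕ} : U0.eps ∈ UFF FY FZ := by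
  simp [UFF]

lemma isOpen_x (i j : ℕ) : IsOpen ({U0.x i j} : Set U0) :=
  TopologicalSpace.GenerateOpen.basic _ (Or.inl (Or.inl (Or.inl ⟨i, j, rfl⟩)))

lemma isOpen_z (k : ℕ) : IsOpen ({U0.z k} : Set U0) :=
  TopologicalSpace.GenerateOpen.basic _ (Or.inl (Or.inl (Or.inr ⟨k, rfl⟩)))

lemma isOpen_Uy (i : ℕ) (F : Finset ℕ) : IsOpen (Uy i F) :=
  TopologicalSpace.GenerateOpen.basic _ (Or.inl (Or.inr ⟨i, F, rfl⟩))

lemma isOpen_UFF (FY FZ : Finset ℕ) : IsOpen (UFF FY FZ) :=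
  TopologicalSpace.GenerateOpen.basic _ (Or.inr ⟨FY, FZ, rfl⟩)


lemma nhds_y {i : ℕ} {s : Set U0} (hs : IsOpen s) (hy : U0.y i ∈ s) :
    ∃ F : Finset ℕ, Uy i F ⊆ s := by
  have hs' : TopologicalSpace.GenerateOpen
      ({s | ∃ i j, s = {U0.x i j}} ∪ {s | ∃ i, s = {U0.z i}} ∪
        {s | ∃ i F, s = Uy i F} ∪ {s | ∃ FY FZ, s = UFF FY FZ}) s := hs
  clear hs
  induction hs' with
  | basic t ht =>
    rcases ht with (((⟨i', j', rfl⟩ | ⟨k, rfl⟩) | ⟨i', F, rfl⟩) | ⟨FY, FZ, rfl⟩)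
    · cases hy
    · cases hy
    · have : i = i' := mem_Uy_y.mp hy
      subst this
      exact ⟨F, le_refl _⟩
    · refine ⟨∅, fun u hu => ?_⟩
      have hiFY : i ∉ FY := mem_UFF_y.mp hy
      rcases hu with (rfl | ⟨j, _, rfl⟩)
      · simpa using hiFY
      · simpa using hiFY
  | univ => exact ⟨∅, Set.subset_univ _⟩
  | inter t₁ t₂ _ _ ih₁ ih₂ =>
    obtain ⟨F₁, h₁⟩ := ih₁ hy.1
    obtain ⟨F₂, h₂⟩ := ih₂ hy.2
    refine ⟨F₁ ∪ F₂, fun u hu => ⟨h₁ ?_, h₂ ?_⟩⟩ <;>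
    · rcases hu with (rfl | ⟨j, hj, rfl⟩)
      · exact Or.inl rfl
      · exact Or.inr ⟨j, fun h => hj (by simp [h]), rfl⟩
  | sUnion S _ ih =>
    obtain ⟨t, ht, hyt⟩ := hy
    obtain ⟨F, hF⟩ := ih t ht hyt
    exact ⟨F, hF.trans (Set.subset_sUnion_of_mem ht)⟩

lemma nhds_eps {s : Set U0} (hs : IsOpen s) (he : U0.eps ∈ s) :
    ∃ FY FZ : Finset ℕ, UFF FY FZ ⊆ s := by
  have hs' : TopologicalSpace.GenerateOpen
      ({s | ∃ i j, s = {U0.x i j}} ∪ {s | ∃ i, s = {U0.z i}} ∪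
        {s | ∃ i F, s = Uy i F} ∪ {s | ∃ FY FZ, s = UFF FY FZ}) s := hs
  clear hs
  induction hs' with
  | basic t ht =>
    rcases ht with (((⟨i', j', rfl⟩ | ⟨k, rfl⟩) | ⟨i', F, rfl⟩) | ⟨FY, FZ, rfl⟩)
    · cases he
    · cases he
    · exact absurd he not_mem_Uy_eps
    · exact ⟨FY, FZ, le_refl _⟩
  | univ => exact ⟨∅, ∅, Set.subset_univ _⟩
  | inter t₁ t₂ _ _ ih₁ ih₂ =>
    obtain ⟨FY₁, FZ₁, h₁⟩ := ih₁ he.1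
    obtain ⟨FY₂, FZ₂, h₂⟩ := ih₂ he.2
    refine ⟨FY₁ ∪ FY₂, FZ₁ ∪ FZ₂, fun u hu => ⟨h₁ ?_, h₂ ?_⟩⟩ <;>
    · rcases u with (⟨i, j⟩ | i | k | _) <;> simp_all
  | sUnion S _ ih =>
    obtain ⟨t, ht, het⟩ := he
    obtain ⟨FY, FZ, hF⟩ := ih t ht het
    exact ⟨FY, FZ, hF.trans (Set.subset_sUnion_of_mem ht)⟩


lemma t2_U0 : T2Space U0 := by
  constructor
  have sym : ∀ a b : U0,
      (∃ u v : Set U0, IsOpen u ∧ IsOpen v ∧ a ∈ u ∧ b ∈ v ∧ Disjoint u v) →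
      (∃ u v : Set U0, IsOpen u ∧ IsOpen v ∧ b ∈ u ∧ a ∈ v ∧ Disjoint u v) := by
    rintro a b ⟨u, v, h1, h2, h3, h4, h5⟩
    exact ⟨v, u, h2, h1, h4, h3, h5.symm⟩
  have sxy : ∀ i j i' : ℕ, ∃ u v : Set U0,
      IsOpen u ∧ IsOpen v ∧ U0.x i j ∈ u ∧ U0.y i' ∈ v ∧ Disjoint u v := by
    intro i j i'
    refine ⟨{U0.x i j}, Uy i' {j}, isOpen_x i j, isOpen_Uy i' {j}, rfl, by simp, ?_⟩
    rw [Set.disjoint_singleton_left]; simp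
  have sxe : ∀ i j : ℕ, ∃ u v : Set U0,
      IsOpen u ∧ IsOpen v ∧ U0.x i j ∈ u ∧ U0.eps ∈ v ∧ Disjoint u v := by
    intro i j
    refine ⟨{U0.x i j}, UFF {i} ∅, isOpen_x i j, isOpen_UFF _ _, rfl, by simp, ?_⟩
    rw [Set.disjoint_singleton_left]; simp
  have sye : ∀ i : ℕ, ∃ u v : Set U0,
      IsOpen u ∧ IsOpen v ∧ U0.y i ∈ u ∧ U0.eps ∈ v ∧ Disjoint u v := by
    intro i
    refine ⟨Uy i ∅, UFF {i} ∅, isOpen_Uy i ∅, isOpen_UFF _ _, by simp, by simp, ?_⟩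
    rw [Set.disjoint_left]
    rintro c hc hc'
    rcases c with ⟨i', j'⟩ | i' | k' | _ <;> simp_all
  have syz : ∀ i k : ℕ, ∃ u v : Set U0,
      IsOpen u ∧ IsOpen v ∧ U0.y i ∈ u ∧ U0.z k ∈ v ∧ Disjoint u v := by
    intro i k
    refine ⟨Uy i ∅, {U0.z k}, isOpen_Uy i ∅, isOpen_z k, by simp, rfl, ?_⟩
    rw [Set.disjoint_singleton_right]; simp
  have sxz : ∀ i j k : ℕ, ∃ u v : Set U0,
      IsOpen u ∧ IsOpen v ∧ U0.x i j ∈ u ∧ U0.z k ∈ v ∧ Disjoint u v := by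
    intro i j k
    refine ⟨{U0.x i j}, {U0.z k}, isOpen_x i j, isOpen_z k, rfl, rfl, ?_⟩
    rw [Set.disjoint_singleton_left]; simp
  have sze : ∀ k : ℕ, ∃ u v : Set U0,
      IsOpen u ∧ IsOpen v ∧ U0.z k ∈ u ∧ U0.eps ∈ v ∧ Disjoint u v := by
    intro k
    refine ⟨{U0.z k}, UFF ∅ {k}, isOpen_z k, isOpen_UFF _ _, rfl, by simp, ?_⟩
    rw [Set.disjoint_singleton_left]; simp
  rintro (⟨i, j⟩ | i | k | _) (⟨i', j'⟩ | i' | k' | _) hab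
  · refine ⟨{U0.x i j}, {U0.x i' j'}, isOpen_x i j, isOpen_x i' j', rfl, rfl, ?_⟩
    rw [Set.disjoint_singleton]; exact hab
  · exact sxy i j i'
  · exact sxz i j k'
  · exact sxe i j
  · exact sym _ _ (sxy i' j' i)
  · have hii' : i ≠ i' := by simpa using hab
    refine ⟨Uy i ∅, Uy i' ∅, isOpen_Uy i ∅, isOpen_Uy i' ∅, by simp, by simp, ?_⟩
    rw [Set.disjoint_left]
    rintro c hc hc'
    rcases c with ⟨a, b⟩ | a | a | _ <;> simp_all
  · exact syz i k'
  · exact sye i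
  · exact sym _ _ (sxz i' j' k)
  · exact sym _ _ (syz i' k)
  · refine ⟨{U0.z k}, {U0.z k'}, isOpen_z k, isOpen_z k', rfl, rfl, ?_⟩
    rw [Set.disjoint_singleton]; exact hab
  · exact sze k
  · exact sym _ _ (sxe i' j')
  · exact sym _ _ (sye i')
  · exact sym _ _ (sze k')
  · exact absurd rfl hab

lemma compact_U0 : CompactSpace U0 := by
  refine ⟨isCompact_of_finite_subcover fun {ι} U hU hcov => ?_⟩
  classical
  have hpt : ∀ u : U0, ∃ n, u ∈ U n := fun u => by
    simpa using hcov (Set.mem_univ u)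
  choose f hf using hpt
  obtain ⟨FY, FZ, hFF⟩ := nhds_eps (hU (f U0.eps)) (hf U0.eps)
  have hFy : ∀ i : ℕ, ∃ F : Finset ℕ, Uy i F ⊆ U (f (U0.y i)) := fun i =>
    nhds_y (hU _) (hf _)
  choose F hFsub using hFy
  refine ⟨(({f U0.eps} ∪ FZ.image (fun k => f (U0.z k))) ∪ FY.image (fun i => f (U0.y i))) ∪
      FY.biUnion (fun i => (F i).image (fun j => f (U0.x i j))), fun u _ => ?_⟩
  have me : f U0.eps ∈ (({f U0.eps} ∪ FZ.image (fun k => f (U0.z k))) ∪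
      FY.image (fun i => f (U0.y i))) ∪
      FY.biUnion (fun i => (F i).image (fun j => f (U0.x i j))) :=
    Finset.mem_union_left _ (Finset.mem_union_left _
      (Finset.mem_union_left _ (Finset.mem_singleton_self _)))
  rcases u with ⟨i, j⟩ | i | k | _
  · by_cases hi : i ∈ FY
    · by_cases hj : j ∈ F i
      · exact Set.mem_biUnion
          (Finset.mem_union_right _
            (Finset.mem_biUnion.mpr ⟨i, hi, Finset.mem_image_of_mem _ hj⟩))
          (hf (U0.x i j))
      · exact Set.mem_biUnion
          (Finset.mem_union_left _
            (Finset.mem_union_right _ (Finset.mem_image_of_mem _ hi)))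
          (hFsub i (mem_Uy_x.mpr ⟨rfl, hj⟩))
    · exact Set.mem_biUnion me (hFF (mem_UFF_x.mpr hi))
  · by_cases hi : i ∈ FY
    · exact Set.mem_biUnion
        (Finset.mem_union_left _
          (Finset.mem_union_right _ (Finset.mem_image_of_mem _ hi)))
        (hFsub i (mem_Uy_y.mpr rfl))
    · exact Set.mem_biUnion me (hFF (mem_UFF_y.mpr hi))
  · by_cases hk : k ∈ FZ
    · exact Set.mem_biUnion
        (Finset.mem_union_left _ (Finset.mem_union_left _
          (Finset.mem_union_right _ (Finset.mem_image_of_mem _ hk))))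
        (hf (U0.z k))
    · exact Set.mem_biUnion me (hFF (mem_UFF_z.mpr hk))
  · exact Set.mem_biUnion me (hFF mem_UFF_eps)

end StmtAux

namespace StmtAux

lemma tendsto_grpd (H : Type) (n : ZMod 2) (i : ℕ) :
    Filter.Tendsto (fun j : ℕ => (Grpd.x i j : Grpd H)) Filter.atTop
      (nhds (Grpd.y n i)) := by
  rw [tendsto_nhds]
  intro s hs hmem
  have hs' : TopologicalSpace.GenerateOpen
      {s | ∃ (g : ZMod 2 × H) (U : Set U0), IsOpen U ∧ s = sigmaMap g '' U} s := hs
  clear hs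
  induction hs' with
  | basic t ht =>
    obtain ⟨g, V, hV, rfl⟩ := ht
    obtain ⟨u, hu, hequ⟩ := hmem
    rcases u with ⟨a, b⟩ | a | a | _ <;> simp only [sigmaMap] at hequ
    · cases hequ
    · have h2 : a = i := (Grpd.y.inj hequ).2
      rw [h2] at hu
      obtain ⟨Fs, hFs⟩ := nhds_y hV hu
      have hev : ∀ᶠ j in Filter.atTop, j ∉ Fs := by
        have := Fs.eventually_cofinite_notMem
        rwa [Nat.cofinite_eq_atTop] at this
      filter_upwards [hev] with j hj
      exact ⟨U0.x i j, hFs (mem_Uy_x.mpr ⟨rfl, hj⟩), rfl⟩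
    · cases hequ
    · cases hequ
  | univ => exact Filter.Eventually.of_forall fun _ => trivial
  | inter t₁ t₂ _ _ ih₁ ih₂ =>
    have e₁ : ∀ᶠ j in Filter.atTop, (Grpd.x i j : Grpd H) ∈ t₁ := ih₁ hmem.1
    have e₂ : ∀ᶠ j in Filter.atTop, (Grpd.x i j : Grpd H) ∈ t₂ := ih₂ hmem.2
    exact e₁.and e₂
  | sUnion S _ ih =>
    obtain ⟨t, ht, h⟩ := hmem
    have e : ∀ᶠ j in Filter.atTop, (Grpd.x i j : Grpd H) ∈ t := ih t ht h
    exact e.mono fun j hj => ⟨t, ht, hj⟩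

lemma y_ne (H : Type) (i : ℕ) : (Grpd.y (0 : ZMod 2) i : Grpd H) ≠ Grpd.y 1 i := by
  intro h
  obtain ⟨h1, -⟩ := Grpd.y.inj h
  exact absurd h1 (by decide)

lemma not_t2_grpd (H : Type) : ¬ T2Space (Grpd H) := by
  intro h
  exact y_ne H 0 (tendsto_nhds_unique (tendsto_grpd H 0 0) (tendsto_grpd H 1 0))

end StmtAux

/-- `𝒢⁰` is compact Hausdorff; `𝒢` is not Hausdorff: for each `i`, the sequence `(x_{ij})_j`
converges in `𝒢` both to `(0,y_i)` and to `(1,y_i)`, which are distinct. -/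
theorem stmt3 (H : Type) [Group H] :
    CompactSpace U0 ∧ T2Space U0 ∧
    ¬ T2Space (Grpd H) ∧
    (∀ i : ℕ,
      Filter.Tendsto (fun j : ℕ => (Grpd.x i j : Grpd H)) Filter.atTop
        (nhds (Grpd.y (0 : ZMod 2) i)) ∧
      Filter.Tendsto (fun j : ℕ => (Grpd.x i j : Grpd H)) Filter.atTop
        (nhds (Grpd.y (1 : ZMod 2) i)) ∧
      (Grpd.y (0 : ZMod 2) i : Grpd H) ≠ Grpd.y (1 : ZMod 2) i) := by
  refine ⟨StmtAux.compact_U0, StmtAux.t2_U0, StmtAux.not_t2_grpd H, fun i => ?_⟩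
  exact ⟨StmtAux.tendsto_grpd H 0 i, StmtAux.tendsto_grpd H 1 i, StmtAux.y_ne H i⟩
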